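/- arXiv:0705.2437 — 3 statements merged into one kernel-verified Lean document; each statement's English description precedes it below -/
import Mathlib

section
/- Nonnegativity and faithfulness of observational divergence: Let ρ and σ be quantum states on ℂ^n with supp(ρ) ⊆ supp(σ). Then D(ρ‖σ) ≥ 0, and D(ρ‖σ) = 0 if and only if ρ = σ. -/
open Matrix BigOperators
open scoped ComplexOrder

noncomputable section

/-- A quantum state: positive semidefinite matrix with unit trace. -/
def IsState {d : Type*} [Fintype d] (ρ : Matrix d d ℂ) : Prop :=
  ρ.PosSemidef ∧ ρ.trace = 1

/-- `SuppLE ρ σ` : the support of `ρ` is contained in the support of `σ`,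
expressed as inclusion of kernels the other way. -/
def SuppLE {d : Type*} [Fintype d] (ρ σ : Matrix d d ℂ) : Prop :=
  ∀ v : d → ℂ, σ *ᵥ v = 0 → ρ *ᵥ v = 0

/-- Matrix logarithm: apply `Real.log` to the eigenvalues (with `log 0 = 0`). -/
noncomputable def matLog {d : Type*} [Fintype d] [DecidableEq d]
    (ρ : Matrix d d ℂ) : Matrix d d ℂ :=
  if h : ρ.IsHermitian then
    (h.eigenvectorUnitary : Matrix d d ℂ) *
      Matrix.diagonal (fun i => (Real.log (h.eigenvalues i) : ℂ)) *
      (star (h.eigenvectorUnitary : Matrix d d ℂ))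
  else 0

/-- Quantum relative entropy `S(ρ‖σ) = Re Tr (ρ (log ρ - log σ))`. -/
noncomputable def relEnt {d : Type*} [Fintype d] [DecidableEq d]
    (ρ σ : Matrix d d ℂ) : ℝ :=
  (Matrix.trace (ρ * (matLog ρ - matLog σ))).re

/-- Trace norm of a Hermitian matrix: sum of absolute values of eigenvalues. -/
noncomputable def traceNorm {d : Type*} [Fintype d] [DecidableEq d]
    (A : Matrix d d ℂ) : ℝ :=
  if h : A.IsHermitian then ∑ i, |h.eigenvalues i| else 0

/-- Rank-one operator `|ψ⟩⟨ψ|`. -/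
def ketbra {d : Type*} (ψ : d → ℂ) : Matrix d d ℂ :=
  Matrix.of fun a b => ψ a * (starRingEnd ℂ) (ψ b)

/-- A POVM element: a positive semidefinite matrix `F` with `1 - F` positive semidefinite. -/
def IsPOVMElem {d : Type*} [Fintype d] [DecidableEq d] (F : Matrix d d ℂ) : Prop :=
  F.PosSemidef ∧ ((1 : Matrix d d ℂ) - F).PosSemidef

/-- `trR F ρ = Re Tr (F ρ)`. -/
noncomputable def trR {d : Type*} [Fintype d] (F ρ : Matrix d d ℂ) : ℝ :=
  (Matrix.trace (F * ρ)).re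

/-- Observational divergence `D(ρ‖σ)`. -/
noncomputable def obsDiv {d : Type*} [Fintype d] [DecidableEq d]
    (ρ σ : Matrix d d ℂ) : ℝ :=
  sSup {x : ℝ | ∃ F : Matrix d d ℂ, IsPOVMElem F ∧ trR F σ ≠ 0 ∧
    x = trR F ρ * Real.logb 2 (trR F ρ / trR F σ)}

/-- A probability distribution on `Fin n`. -/
def IsProbDist {n : ℕ} (P : Fin n → ℝ) : Prop :=
  (∀ i, 0 ≤ P i) ∧ ∑ i, P i = 1

/-- Classical relative entropy (base 2); terms with `P i = 0` contribute `0`. -/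
noncomputable def cRelEnt {n : ℕ} (P Q : Fin n → ℝ) : ℝ :=
  ∑ i, P i * Real.logb 2 (P i / Q i)

/-- Classical observational divergence. -/
noncomputable def cObsDiv {n : ℕ} (P Q : Fin n → ℝ) : ℝ :=
  sSup {x : ℝ | ∃ f : Fin n → ℝ, (∀ i, 0 ≤ f i ∧ f i ≤ 1) ∧
    (∑ i, f i * Q i) ≠ 0 ∧
    x = (∑ i, f i * P i) * Real.logb 2 ((∑ i, f i * P i) / (∑ i, f i * Q i))}


/-! ### Auxiliary lemmas -/

private lemma conj_move' {m : Type*} [Fintype m] (M : Matrix m m ℂ) (x y : m → ℂ) :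
    star x ⬝ᵥ M *ᵥ y = star (Mᴴ *ᵥ x) ⬝ᵥ y := by
  rw [dotProduct_mulVec, star_mulVec, conjTranspose_conjTranspose]

private lemma unitary_dot_self' {m : Type*} [Fintype m] [DecidableEq m] {U : Matrix m m ℂ}
    (hU : U ∈ Matrix.unitaryGroup m ℂ) (x : m → ℂ) :
    star (U *ᵥ x) ⬝ᵥ (U *ᵥ x) = star x ⬝ᵥ x := by
  rw [conj_move', mulVec_mulVec, ← Matrix.star_eq_conjTranspose,
    Matrix.mem_unitaryGroup_iff'.mp hU, one_mulVec]

private lemma spectral_dot' {m : Type*} [Fintype m] [DecidableEq m] {A : Matrix m m ℂ}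
    (hH : A.IsHermitian) (v : m → ℂ) :
    star v ⬝ᵥ A *ᵥ v =
      star ((star (hH.eigenvectorUnitary : Matrix m m ℂ)) *ᵥ v) ⬝ᵥ
        (Matrix.diagonal (fun i => (hH.eigenvalues i : ℂ)) *ᵥ
          ((star (hH.eigenvectorUnitary : Matrix m m ℂ)) *ᵥ v)) := by
  set U : Matrix m m ℂ := (hH.eigenvectorUnitary : Matrix m m ℂ) with hU
  set D : Matrix m m ℂ := Matrix.diagonal (fun i => (hH.eigenvalues i : ℂ)) with hD
  have hspec : A = U * D * star U := by
    simpa [hU, hD, Function.comp_def] using hH.spectral_theorem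
  calc star v ⬝ᵥ A *ᵥ v = star v ⬝ᵥ U *ᵥ (D *ᵥ (star U *ᵥ v)) := by
        rw [hspec]; simp [mulVec_mulVec, Matrix.mul_assoc]
    _ = star (Uᴴ *ᵥ v) ⬝ᵥ (D *ᵥ (star U *ᵥ v)) := conj_move' U v _
    _ = _ := by rw [Matrix.star_eq_conjTranspose]

private lemma trace_re_eq_sum' {m : Type*} [Fintype m] [DecidableEq m] {A : Matrix m m ℂ}
    (hH : A.IsHermitian) : A.trace.re = ∑ i, hH.eigenvalues i := by
  set U : Matrix m m ℂ := (hH.eigenvectorUnitary : Matrix m m ℂ) with hU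
  set D : Matrix m m ℂ := Matrix.diagonal (fun i => (hH.eigenvalues i : ℂ)) with hD
  have hspec : A = U * D * star U := by
    simpa [hU, hD, Function.comp_def] using hH.spectral_theorem
  have h1 : star U * U = 1 := Matrix.mem_unitaryGroup_iff'.mp hH.eigenvectorUnitary.2
  have : A.trace = D.trace := by
    rw [hspec, Matrix.trace_mul_cycle, h1, Matrix.one_mul]
  rw [this, hD, Matrix.trace_diagonal]
  simp [Complex.re_sum]

private lemma dot_self_re' {m : Type*} [Fintype m] (w : m → ℂ) :
    (star w ⬝ᵥ w).re = ∑ i, Complex.normSq (w i) := by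
  simp only [dotProduct, Pi.star_apply, Complex.re_sum]
  refine Finset.sum_congr rfl fun i _ => ?_
  rw [Complex.star_def, mul_comm, Complex.mul_conj]
  simp

private lemma diag_dot_re' {m : Type*} [Fintype m] [DecidableEq m] (d : m → ℝ) (w : m → ℂ) :
    (star w ⬝ᵥ (Matrix.diagonal (fun i => (d i : ℂ)) *ᵥ w)).re
      = ∑ i, d i * Complex.normSq (w i) := by
  simp only [dotProduct, mulVec_diagonal, Pi.star_apply, Complex.re_sum]
  refine Finset.sum_congr rfl fun i _ => ?_
  have : star (w i) * ((d i : ℂ) * w i) = (d i : ℂ) * ((w i) * (starRingEnd ℂ) (w i)) := by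
    rw [Complex.star_def]; ring
  rw [this, Complex.mul_conj]
  simp [← Complex.ofReal_mul]

private lemma quad_le_trace' {m : Type*} [Fintype m] [DecidableEq m]
    {A : Matrix m m ℂ} (hA : A.PosSemidef) (v : m → ℂ) :
    (star v ⬝ᵥ A *ᵥ v).re ≤ A.trace.re * (star v ⬝ᵥ v).re := by
  have hH := hA.1
  set w := (star (hH.eigenvectorUnitary : Matrix m m ℂ)) *ᵥ v with hw
  have hvw : star v ⬝ᵥ v = star w ⬝ᵥ w := by
    rw [hw, unitary_dot_self' (Unitary.star_mem hH.eigenvectorUnitary.2) v]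
  rw [spectral_dot' hH v, hvw, ← hw, diag_dot_re', dot_self_re', trace_re_eq_sum' hH]
  calc ∑ i, hH.eigenvalues i * Complex.normSq (w i)
      ≤ ∑ i, hH.eigenvalues i * (∑ j, Complex.normSq (w j)) := by
        refine Finset.sum_le_sum fun i _ => ?_
        exact mul_le_mul_of_nonneg_left
          (Finset.single_le_sum (fun j _ => Complex.normSq_nonneg _) (Finset.mem_univ i))
          (hA.eigenvalues_nonneg i)
    _ = (∑ i, hH.eigenvalues i) * (∑ j, Complex.normSq (w j)) := by
        rw [← Finset.sum_mul]

private lemma quad_bound' {n : ℕ} {ρ σ : Matrix (Fin n) (Fin n) ℂ}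
    (hρ : ρ.PosSemidef) (hρt : ρ.trace = 1) (hσ : σ.PosSemidef) (hσt : σ.trace = 1)
    (hsupp : ∀ v : Fin n → ℂ, σ *ᵥ v = 0 → ρ *ᵥ v = 0) :
    ∃ c : ℝ, 0 < c ∧ ∀ v : Fin n → ℂ,
      (star v ⬝ᵥ ρ *ᵥ v).re ≤ c * (star v ⬝ᵥ σ *ᵥ v).re := by
  have hH := hσ.1
  set U : Matrix (Fin n) (Fin n) ℂ := (hH.eigenvectorUnitary : Matrix (Fin n) (Fin n) ℂ) with hU
  set μ := hH.eigenvalues with hμ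
  set D : Matrix (Fin n) (Fin n) ℂ := Matrix.diagonal (fun i => (μ i : ℂ)) with hD
  have hspec : σ = U * D * star U := by
    simpa [hU, hD, Function.comp_def] using hH.spectral_theorem
  have hUU : U * star U = 1 := Matrix.mem_unitaryGroup_iff.mp hH.eigenvectorUnitary.2
  have hUU' : star U * U = 1 := Matrix.mem_unitaryGroup_iff'.mp hH.eigenvectorUnitary.2
  have hsum : ∑ i, μ i = 1 := by
    have := trace_re_eq_sum' hH
    rw [hσt] at this; simpa using this.symm
  set T : Finset (Fin n) := Finset.univ.filter (fun i => 0 < μ i) with hT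
  have hTne : T.Nonempty := by
    rw [Finset.filter_nonempty_iff]
    by_contra h
    push_neg at h
    have : ∑ i, μ i = 0 := Finset.sum_eq_zero fun i _ =>
      le_antisymm (h i (Finset.mem_univ i)) (hσ.eigenvalues_nonneg i)
    rw [hsum] at this; exact one_ne_zero this
  set mm := T.inf' hTne μ with hmm
  have hm : 0 < mm := by
    rw [hmm, Finset.lt_inf'_iff]
    exact fun i hi => (Finset.mem_filter.mp hi).2
  refine ⟨mm⁻¹, inv_pos.mpr hm, fun v => ?_⟩
  set w := star U *ᵥ v with hw
  set w' : Fin n → ℂ := fun i => if 0 < μ i then w i else 0 with hw'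
  set v' := U *ᵥ w' with hv'
  have hvw : v = U *ᵥ w := by rw [hw, mulVec_mulVec, hUU, one_mulVec]
  have hσv : σ *ᵥ (v - v') = 0 := by
    have h1 : v - v' = U *ᵥ (w - w') := by rw [mulVec_sub, ← hvw, hv']
    have h2 : D *ᵥ (w - w') = 0 := by
      funext i
      simp only [mulVec_diagonal, hD, Pi.sub_apply, Pi.zero_apply]
      by_cases hi : 0 < μ i
      · simp [hw', hi]
      · have : μ i = 0 := le_antisymm (not_lt.mp hi) (hσ.eigenvalues_nonneg i)
        simp [this]
    rw [h1, mulVec_mulVec, hspec, Matrix.mul_assoc (U * D), hUU', Matrix.mul_one,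
      ← mulVec_mulVec, h2, mulVec_zero]
  have hρv : ρ *ᵥ v = ρ *ᵥ v' := by
    have := hsupp _ hσv
    rwa [mulVec_sub, sub_eq_zero] at this
  have key : star v ⬝ᵥ ρ *ᵥ v = star v' ⬝ᵥ ρ *ᵥ v' := by
    calc star v ⬝ᵥ ρ *ᵥ v = star (ρᴴ *ᵥ v) ⬝ᵥ v' := by rw [hρv, conj_move']
      _ = star (ρᴴ *ᵥ v') ⬝ᵥ v' := by rw [hρ.1, hρv]
      _ = star v' ⬝ᵥ ρ *ᵥ v' := (conj_move' ρ v' v').symm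
  have hv'n : (star v' ⬝ᵥ v').re = ∑ i, Complex.normSq (w' i) := by
    rw [hv', unitary_dot_self' hH.eigenvectorUnitary.2, dot_self_re']
  have step1 : (star v ⬝ᵥ ρ *ᵥ v).re ≤ ∑ i, Complex.normSq (w' i) := by
    rw [key, ← hv'n]
    have := quad_le_trace' hρ v'
    rwa [hρt, Complex.one_re, one_mul] at this
  have hσq : (star v ⬝ᵥ σ *ᵥ v).re = ∑ i, μ i * Complex.normSq (w i) := by
    rw [spectral_dot' hH v, ← hU, ← hw, ← hμ, diag_dot_re']
  rw [hσq]
  refine step1.trans ?_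
  rw [inv_mul_eq_div, le_div_iff₀ hm, Finset.sum_mul]
  refine Finset.sum_le_sum fun i _ => ?_
  by_cases hi : 0 < μ i
  · have h1 : w' i = w i := by simp [hw', hi]
    have h2 : mm ≤ μ i := Finset.inf'_le μ (by simp [hT, hi])
    rw [h1, mul_comm]
    exact mul_le_mul_of_nonneg_right h2 (Complex.normSq_nonneg _)
  · have h1 : w' i = 0 := by simp [hw', hi]
    rw [h1]
    simpa using mul_nonneg (hσ.eigenvalues_nonneg i) (Complex.normSq_nonneg _)

private lemma nonneg_eq_re' {z : ℂ} (h : 0 ≤ z) : z = (z.re : ℂ) := by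
  rw [Complex.le_def] at h
  exact Complex.ext rfl (by simpa using h.2.symm)

private lemma trace_mul_re_nonneg' {m : Type*} [Fintype m] [DecidableEq m] {F M : Matrix m m ℂ}
    (hF : F.PosSemidef) (hM : M.PosSemidef) : 0 ≤ (F * M).trace.re := by
  obtain ⟨B, hB⟩ : ∃ B : Matrix m m ℂ, F = Bᴴ * B := by
    open scoped MatrixOrder in
    exact ⟨CFC.sqrt F, by rw [← Matrix.star_eq_conjTranspose,
      (IsSelfAdjoint.of_nonneg (CFC.sqrt_nonneg F)).star_eq, CFC.sqrt_mul_sqrt_self F hF.nonneg]⟩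
  have hpsd := hM.mul_mul_conjTranspose_same B
  rw [hB, Matrix.mul_assoc, Matrix.trace_mul_comm]
  rw [trace_re_eq_sum' hpsd.1]
  exact Finset.sum_nonneg fun i _ => hpsd.eigenvalues_nonneg i

private lemma ketbra_mulVec' {m : Type*} [Fintype m] (ψ x : m → ℂ) :
    ketbra ψ *ᵥ x = (star ψ ⬝ᵥ x) • ψ := by
  funext a
  simp only [ketbra, mulVec, dotProduct, of_apply, Pi.smul_apply, Pi.star_apply, smul_eq_mul,
    Finset.sum_mul]
  refine Finset.sum_congr rfl fun b _ => ?_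
  rw [Complex.star_def]; ring

private lemma trace_ketbra_mul' {m : Type*} [Fintype m] (ψ : m → ℂ) (A : Matrix m m ℂ) :
    (ketbra ψ * A).trace = star ψ ⬝ᵥ A *ᵥ ψ := by
  simp only [ketbra, Matrix.trace, Matrix.diag, Matrix.mul_apply, of_apply, dotProduct, mulVec,
    Pi.star_apply]
  rw [Finset.sum_comm]
  refine Finset.sum_congr rfl fun b _ => ?_
  rw [Finset.mul_sum]
  refine Finset.sum_congr rfl fun a _ => ?_
  rw [Complex.star_def]; ring

private lemma star_dot_comm' {m : Type*} [Fintype m] (ψ x : m → ℂ) :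
    star x ⬝ᵥ ψ = (starRingEnd ℂ) (star ψ ⬝ᵥ x) := by
  simp only [dotProduct, Pi.star_apply, map_sum, Complex.star_def]
  refine Finset.sum_congr rfl fun b _ => ?_
  rw [RingHom.map_mul, Complex.conj_conj]
  ring

private lemma cauchy_schwarz' {m : Type*} [Fintype m] {ψ : m → ℂ} (x : m → ℂ)
    (hψ : star ψ ⬝ᵥ ψ = 1) :
    Complex.normSq (star ψ ⬝ᵥ x) ≤ (star x ⬝ᵥ x).re := by
  set ψ' : EuclideanSpace ℂ m := (WithLp.equiv 2 (m → ℂ)).symm ψ with hψ'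
  set x' : EuclideanSpace ℂ m := (WithLp.equiv 2 (m → ℂ)).symm x with hx'
  have hinner : (inner ℂ ψ' x' : ℂ) = star ψ ⬝ᵥ x :=
    (EuclideanSpace.inner_toLp_toLp ψ x).trans (dotProduct_comm _ _)
  have hxx : (inner ℂ x' x' : ℂ) = star x ⬝ᵥ x :=
    (EuclideanSpace.inner_toLp_toLp x x).trans (dotProduct_comm _ _)
  have hnψ : ‖ψ'‖ = 1 := by
    have h1 : (inner ℂ ψ' ψ' : ℂ) = 1 := by
      exact (EuclideanSpace.inner_toLp_toLp ψ ψ).trans ((dotProduct_comm _ _).trans hψ)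
    have h2 : ‖ψ'‖ * ‖ψ'‖ = 1 := by
      have h3 := inner_self_eq_norm_mul_norm (𝕜 := ℂ) ψ'
      rw [h1] at h3
      simpa using h3.symm
    nlinarith [norm_nonneg ψ']
  have hCS : ‖(inner ℂ ψ' x' : ℂ)‖ ≤ ‖x'‖ := by
    have := norm_inner_le_norm (𝕜 := ℂ) ψ' x'
    rwa [hnψ, one_mul] at this
  have hx2 : (star x ⬝ᵥ x).re = ‖x'‖ ^ 2 := by
    rw [← hxx, inner_self_eq_norm_sq_to_K]
    simp [← Complex.ofReal_pow]
  rw [hx2, ← hinner]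
  calc Complex.normSq (inner ℂ ψ' x' : ℂ) = ‖(inner ℂ ψ' x' : ℂ)‖ ^ 2 := by
        rw [Complex.normSq_eq_norm_sq]
    _ ≤ ‖x'‖ ^ 2 := pow_le_pow_left₀ (norm_nonneg _) hCS 2

private lemma ketbra_povm' {m : Type*} [Fintype m] [DecidableEq m] {ψ : m → ℂ}
    (hψ : star ψ ⬝ᵥ ψ = 1) : IsPOVMElem (ketbra ψ) := by
  have hherm : (ketbra ψ).IsHermitian := by
    ext a b
    simp only [conjTranspose_apply, ketbra, of_apply, star_mul', Complex.star_def,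
      Complex.conj_conj]
    ring
  constructor
  · refine .of_dotProduct_mulVec_nonneg hherm fun x => ?_
    rw [ketbra_mulVec', dotProduct_smul, smul_eq_mul, star_dot_comm' ψ x, mul_comm,
      ← Complex.star_def]
    exact star_mul_self_nonneg _
  · refine .of_dotProduct_mulVec_nonneg (by rw [Matrix.IsHermitian, Matrix.conjTranspose_sub, Matrix.conjTranspose_one,
      hherm.eq]) fun x => ?_
    rw [sub_mulVec, one_mulVec, dotProduct_sub, ketbra_mulVec', dotProduct_smul, smul_eq_mul,
      star_dot_comm' ψ x]
    set z := star ψ ⬝ᵥ x with hz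
    have h1 : z * (starRingEnd ℂ) z = (Complex.normSq z : ℂ) := Complex.mul_conj z
    have h2 : star x ⬝ᵥ x = ((star x ⬝ᵥ x).re : ℂ) :=
      nonneg_eq_re' (Finset.sum_nonneg fun i _ => star_mul_self_nonneg _)
    rw [h1, h2, ← Complex.ofReal_sub]
    rw [Complex.zero_le_real]
    have := cauchy_schwarz' x hψ
    rw [← hz] at this
    linarith

/-- Nonnegativity and faithfulness of observational divergence. -/
theorem obsDiv_nonneg_and_faithful {n : ℕ} (ρ σ : Matrix (Fin n) (Fin n) ℂ)
    (hρ : IsState ρ) (hσ : IsState σ) (hsupp : SuppLE ρ σ) :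
    0 ≤ obsDiv ρ σ ∧ (obsDiv ρ σ = 0 ↔ ρ = σ) := by
  obtain ⟨hρpsd, hρtr⟩ := hρ
  obtain ⟨hσpsd, hσtr⟩ := hσ
  set S : Set ℝ := {x : ℝ | ∃ F : Matrix (Fin n) (Fin n) ℂ, IsPOVMElem F ∧ trR F σ ≠ 0 ∧
    x = trR F ρ * Real.logb 2 (trR F ρ / trR F σ)} with hS
  have hSdef : obsDiv ρ σ = sSup S := rfl
  -- 0 is in the set
  have h1ρ : trR 1 ρ = 1 := by rw [trR, Matrix.one_mul, hρtr, Complex.one_re]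
  have h1σ : trR 1 σ = 1 := by rw [trR, Matrix.one_mul, hσtr, Complex.one_re]
  have hpovm1 : IsPOVMElem (1 : Matrix (Fin n) (Fin n) ℂ) :=
    ⟨Matrix.PosSemidef.one, by rw [sub_self]; exact Matrix.PosSemidef.zero⟩
  have h0mem : (0 : ℝ) ∈ S := by
    refine ⟨1, hpovm1, by rw [h1σ]; exact one_ne_zero, ?_⟩
    rw [h1ρ, h1σ, div_one, Real.logb_one, mul_zero]
  -- the bound
  obtain ⟨c, hc, hquad⟩ := quad_bound' hρpsd hρtr hσpsd hσtr hsupp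
  have hpsd_c : (((c : ℂ)) • σ - ρ).PosSemidef := by
    refine Matrix.PosSemidef.of_dotProduct_mulVec_nonneg ?_ ?_
    · rw [Matrix.IsHermitian, Matrix.conjTranspose_sub, Matrix.conjTranspose_smul,
        hσpsd.1.eq, hρpsd.1.eq, Complex.star_def, Complex.conj_ofReal]
    · intro x
      rw [sub_mulVec, dotProduct_sub, smul_mulVec, dotProduct_smul, smul_eq_mul]
      have ha := hσpsd.dotProduct_mulVec_nonneg x
      have hb := hρpsd.dotProduct_mulVec_nonneg x
      rw [nonneg_eq_re' ha, nonneg_eq_re' hb, ← Complex.ofReal_mul, ← Complex.ofReal_sub,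
        Complex.zero_le_real]
      have := hquad x
      linarith
  have hkey : ∀ F : Matrix (Fin n) (Fin n) ℂ, F.PosSemidef → trR F ρ ≤ c * trR F σ := by
    intro F hF
    have h0 := trace_mul_re_nonneg' hF hpsd_c
    have hexp : (F * (((c : ℂ)) • σ - ρ)).trace.re = c * trR F σ - trR F ρ := by
      rw [Matrix.mul_sub, Matrix.mul_smul, Matrix.trace_sub, Matrix.trace_smul, Complex.sub_re]
      simp [trR, Complex.smul_re]
    rw [hexp] at h0
    linarith
  have hle_one : ∀ F : Matrix (Fin n) (Fin n) ℂ, IsPOVMElem F → trR F ρ ≤ 1 := by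
    intro F hF
    have h0 := trace_mul_re_nonneg' hF.2 hρpsd
    have hexp : ((1 - F) * ρ).trace.re = 1 - trR F ρ := by
      rw [Matrix.sub_mul, Matrix.one_mul, Matrix.trace_sub, Complex.sub_re, hρtr, Complex.one_re]
      rfl
    rw [hexp] at h0
    linarith
  have htrnn : ∀ F : Matrix (Fin n) (Fin n) ℂ, F.PosSemidef →
      ∀ M : Matrix (Fin n) (Fin n) ℂ, M.PosSemidef → 0 ≤ trR F M :=
    fun F hF M hM => trace_mul_re_nonneg' hF hM
  -- bounded above
  have hbdd : BddAbove S := by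
    refine ⟨max 0 (Real.logb 2 c), fun x hx => ?_⟩
    obtain ⟨F, hF, hq, rfl⟩ := hx
    set p := trR F ρ with hp
    set q := trR F σ with hqd
    have hp0 : 0 ≤ p := htrnn F hF.1 ρ hρpsd
    have hq0 : 0 < q := lt_of_le_of_ne (htrnn F hF.1 σ hσpsd) (Ne.symm hq)
    have hpq : p ≤ c * q := hkey F hF.1
    have hp1 : p ≤ 1 := hle_one F hF
    rcases eq_or_lt_of_le hp0 with h | h
    · rw [← h, zero_mul]; exact le_max_left _ _
    · have hratio : p / q ≤ c := (div_le_iff₀ hq0).mpr (by linarith [mul_comm c q])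
      rcases le_or_gt (Real.logb 2 (p / q)) 0 with hL | hL
      · exact le_trans (mul_nonpos_of_nonneg_of_nonpos hp0 hL) (le_max_left _ _)
      · have h2 : Real.logb 2 (p / q) ≤ Real.logb 2 c :=
          Real.logb_le_logb_of_le (by norm_num) (div_pos h hq0) hratio
        calc p * Real.logb 2 (p / q) ≤ 1 * Real.logb 2 (p / q) :=
              mul_le_mul_of_nonneg_right hp1 hL.le
          _ = Real.logb 2 (p / q) := one_mul _
          _ ≤ Real.logb 2 c := h2
          _ ≤ max 0 (Real.logb 2 c) := le_max_right _ _
  have hnonneg : 0 ≤ obsDiv ρ σ := by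
    rw [hSdef]
    exact le_csSup hbdd h0mem
  -- positivity when ρ ≠ σ
  have hpos : ρ ≠ σ → 0 < obsDiv ρ σ := by
    intro hne
    set Δ := ρ - σ with hΔ
    have hΔH : Δ.IsHermitian := hρpsd.1.sub hσpsd.1
    have hΔne : Δ ≠ 0 := sub_ne_zero.mpr hne
    have htr0 : ∑ i, hΔH.eigenvalues i = 0 := by
      rw [← trace_re_eq_sum' hΔH, hΔ, Matrix.trace_sub, hρtr, hσtr, sub_self, Complex.zero_re]
    have hex : ∃ i, 0 < hΔH.eigenvalues i := by
      by_contra h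
      push_neg at h
      have hall : ∀ i ∈ Finset.univ, hΔH.eigenvalues i = 0 :=
        (Finset.sum_eq_zero_iff_of_nonpos (fun i _ => h i)).mp htr0
      apply hΔne
      have hspec := hΔH.spectral_theorem
      have hDzero : Matrix.diagonal (RCLike.ofReal ∘ hΔH.eigenvalues) =
          (0 : Matrix (Fin n) (Fin n) ℂ) := by
        ext a b
        simp only [Matrix.diagonal, Matrix.of_apply, Function.comp_apply, Matrix.zero_apply]
        rw [hall a (Finset.mem_univ a)]
        simp
      rw [hspec, hDzero, map_zero]
    obtain ⟨i, hi⟩ := hex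
    set t := hΔH.eigenvalues i with ht
    set ψ : Fin n → ℂ := ⇑(hΔH.eigenvectorBasis i) with hψd
    have hunit : star ψ ⬝ᵥ ψ = 1 := by
      have h1 : (inner ℂ (hΔH.eigenvectorBasis i) (hΔH.eigenvectorBasis i) : ℂ) = 1 := by
        rw [inner_self_eq_norm_sq_to_K, hΔH.eigenvectorBasis.orthonormal.1 i]
        simp
      rw [← h1]
      exact dotProduct_comm _ _
    have heig : Δ *ᵥ ψ = (t : ℂ) • ψ := by
      have h2 := hΔH.mulVec_eigenvectorBasis i
      funext a
      have h3 := congrFun h2 a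
      simpa [Complex.real_smul] using h3
    set F := ketbra ψ with hF
    have hPOVM : IsPOVMElem F := ketbra_povm' hunit
    have hFA : ∀ A : Matrix (Fin n) (Fin n) ℂ, trR F A = (star ψ ⬝ᵥ A *ᵥ ψ).re := by
      intro A
      rw [trR, hF, trace_ketbra_mul']
    have hdiff : trR F ρ - trR F σ = t := by
      rw [hFA ρ, hFA σ, ← Complex.sub_re, ← dotProduct_sub, ← sub_mulVec, ← hΔ, heig,
        dotProduct_smul, hunit]
      simp
    have hqne : trR F σ ≠ 0 := by
      intro h0
      have hz : star ψ ⬝ᵥ σ *ᵥ ψ = 0 := by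
        rw [nonneg_eq_re' (hσpsd.dotProduct_mulVec_nonneg ψ), ← hFA σ, h0]
        simp
      have hσψ : σ *ᵥ ψ = 0 := (hσpsd.dotProduct_mulVec_zero_iff ψ).mp hz
      have hρψ : ρ *ᵥ ψ = 0 := hsupp ψ hσψ
      have hΔψ : Δ *ᵥ ψ = 0 := by rw [hΔ, sub_mulVec, hρψ, hσψ, sub_self]
      rw [heig] at hΔψ
      rcases smul_eq_zero.mp hΔψ with h | h
      · exact absurd (by exact_mod_cast h : t = 0) (ne_of_gt hi)
      · rw [h] at hunit
        simp at hunit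
    have hq0 : 0 < trR F σ := lt_of_le_of_ne (htrnn F hPOVM.1 σ hσpsd) (Ne.symm hqne)
    have hp0 : 0 < trR F ρ := by
      have : trR F ρ = trR F σ + t := by linarith [hdiff]
      rw [this]; positivity
    have hxpos : 0 < trR F ρ * Real.logb 2 (trR F ρ / trR F σ) := by
      apply mul_pos hp0
      apply Real.logb_pos (by norm_num)
      rw [lt_div_iff₀ hq0, one_mul]
      linarith [hdiff]
    have hxmem : trR F ρ * Real.logb 2 (trR F ρ / trR F σ) ∈ S := ⟨F, hPOVM, hqne, rfl⟩
    calc (0:ℝ) < trR F ρ * Real.logb 2 (trR F ρ / trR F σ) := hxpos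
      _ ≤ obsDiv ρ σ := by rw [hSdef]; exact le_csSup hbdd hxmem
  refine ⟨hnonneg, ?_, ?_⟩
  · intro h0
    by_contra hne
    exact absurd h0 (ne_of_gt (hpos hne))
  · intro heq
    subst heq
    have hSeq : S = {0} := by
      apply Set.eq_singleton_iff_unique_mem.mpr
      refine ⟨h0mem, fun x hx => ?_⟩
      obtain ⟨F, hF, hq, rfl⟩ := hx
      rw [div_self hq, Real.logb_one, mul_zero]
    rw [hSdef, hSeq, csSup_singleton]

end
end

section
/- Attainment of the observational divergence supremum: Let ρ and σ be quantum states on ℂ^n with supp(ρ) ⊆ supp(σ). Then there exists a POVM element F on ℂ^n with Tr(Fσ) ≠ 0 such that for every POVM element G on ℂ^n with Tr(Gσ) ≠ 0, Tr(Gρ)·logb 2 (Tr(Gρ)/Tr(Gσ)) ≤ Tr(Fρ)·logb 2 (Tr(Fρ)/Tr(Fσ)); i.e., the supremum defining D(ρ‖σ) is attained and is finite. -/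
open Matrix BigOperators
open scoped ComplexOrder

noncomputable section

namespace ObsAux
variable {n : ℕ}

lemma psd_entry_nonneg {A : Matrix (Fin n) (Fin n) ℂ} (hA : A.PosSemidef) (i : Fin n) :
    0 ≤ A i i := by
  have h := hA.dotProduct_mulVec_nonneg ((Pi.single i 1 : Fin n → ℂ))
  have hs : star ((Pi.single i 1 : Fin n → ℂ)) = (Pi.single i 1 : Fin n → ℂ) := by
    ext j; by_cases hj : j = i <;> simp [Pi.single_apply, hj]
  rw [hs, mulVec_single, single_dotProduct, one_mul] at h
  simpa using h

lemma psd_trace_nonneg {A : Matrix (Fin n) (Fin n) ℂ} (hA : A.PosSemidef) : 0 ≤ A.trace :=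
  Finset.sum_nonneg fun i _ => psd_entry_nonneg hA i

lemma trace_mul_psd_nonneg {A B : Matrix (Fin n) (Fin n) ℂ}
    (hA : A.PosSemidef) (hB : B.PosSemidef) : 0 ≤ (A * B).trace := by
  obtain ⟨C, rfl⟩ := by open scoped MatrixOrder in exact CStarAlgebra.nonneg_iff_eq_star_mul_self.mp hA.nonneg
  rw [← Matrix.trace_mul_cycle]
  exact psd_trace_nonneg (hB.mul_mul_conjTranspose_same C)

lemma trR_nonneg {F ρ : Matrix (Fin n) (Fin n) ℂ} (hF : F.PosSemidef) (hρ : ρ.PosSemidef) :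
    0 ≤ trR F ρ :=
  (Complex.nonneg_iff.mp (trace_mul_psd_nonneg hF hρ)).1

lemma trR_le_c {ρ σ F : Matrix (Fin n) (Fin n) ℂ} {c : ℝ}
    (h : (((c : ℝ) : ℂ) • σ - ρ).PosSemidef) (hF : F.PosSemidef) :
    trR F ρ ≤ c * trR F σ := by
  have h0 := (Complex.nonneg_iff.mp (trace_mul_psd_nonneg hF h)).1
  have h1 : F * (((c : ℝ) : ℂ) • σ - ρ) = ((c : ℝ) : ℂ) • (F * σ) - F * ρ := by
    rw [Matrix.mul_sub, Matrix.mul_smul]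
  rw [h1, Matrix.trace_sub, Matrix.trace_smul, Complex.sub_re, smul_eq_mul,
    Complex.re_ofReal_mul] at h0
  simpa [trR] using h0

lemma trR_le_one {F ρ : Matrix (Fin n) (Fin n) ℂ} (hF : IsPOVMElem F) (hρp : ρ.PosSemidef)
    (hρt : ρ.trace = 1) : trR F ρ ≤ 1 := by
  have h0 := trR_nonneg hF.2 hρp
  have h1 : trR (1 - F) ρ = 1 - trR F ρ := by
    simp [trR, Matrix.sub_mul, Matrix.trace_sub, Complex.sub_re, hρt]
  rw [h1] at h0
  linarith

lemma continuous_trR (ρ : Matrix (Fin n) (Fin n) ℂ) :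
    Continuous fun F : Matrix (Fin n) (Fin n) ℂ => trR F ρ := by
  have h : (fun F : Matrix (Fin n) (Fin n) ℂ => trR F ρ)
      = fun F => (∑ i, ∑ j, F i j * ρ j i).re := by
    funext F
    simp [trR, Matrix.trace, Matrix.mul_apply, Matrix.diag]
  rw [h]
  exact Complex.continuous_re.comp (continuous_finset_sum _ fun i _ =>
    continuous_finset_sum _ fun j _ =>
      Continuous.mul (f := fun F : Matrix (Fin n) (Fin n) ℂ => F i j) ((continuous_apply j).comp (continuous_apply i)) continuous_const)

lemma isClosed_psd : IsClosed {F : Matrix (Fin n) (Fin n) ℂ | F.PosSemidef} := by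
  have h1 : {F : Matrix (Fin n) (Fin n) ℂ | F.PosSemidef}
      = {F : Matrix (Fin n) (Fin n) ℂ | Fᴴ = F}
        ∩ ⋂ v : Fin n → ℂ, {F : Matrix (Fin n) (Fin n) ℂ | 0 ≤ star v ⬝ᵥ F *ᵥ v} := by
    ext F
    simp only [Set.mem_setOf_eq, Set.mem_inter_iff, Set.mem_iInter]
    exact ⟨fun h => ⟨h.1, h.dotProduct_mulVec_nonneg⟩, fun h => .of_dotProduct_mulVec_nonneg h.1 h.2⟩
  rw [h1]
  have hct : Continuous fun F : Matrix (Fin n) (Fin n) ℂ => Fᴴ := by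
    apply continuous_pi
    intro i
    apply continuous_pi
    intro j
    exact Complex.continuous_conj.comp ((continuous_apply i).comp (continuous_apply j))
  refine IsClosed.inter (isClosed_eq hct continuous_id) (isClosed_iInter fun v => ?_)
  have hc : Continuous fun F : Matrix (Fin n) (Fin n) ℂ => star v ⬝ᵥ F *ᵥ v := by
    have h2 : (fun F : Matrix (Fin n) (Fin n) ℂ => star v ⬝ᵥ F *ᵥ v)
        = fun F => ∑ i, star v i * ∑ j, F i j * v j := by
      funext F
      simp [dotProduct, Matrix.mulVec]
    rw [h2]
    exact continuous_finset_sum _ fun i _ => continuous_const.mul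
      (continuous_finset_sum _ fun j _ =>
        Continuous.mul (f := fun F : Matrix (Fin n) (Fin n) ℂ => F i j) ((continuous_apply j).comp (continuous_apply i)) continuous_const)
  have h3 : {F : Matrix (Fin n) (Fin n) ℂ | 0 ≤ star v ⬝ᵥ F *ᵥ v}
      = (fun F : Matrix (Fin n) (Fin n) ℂ => star v ⬝ᵥ F *ᵥ v) ⁻¹'
        (Complex.re ⁻¹' Set.Ici 0 ∩ Complex.im ⁻¹' {0}) := by
    ext F
    simp only [Set.mem_setOf_eq, Set.mem_preimage, Set.mem_inter_iff, Set.mem_Ici,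
      Set.mem_singleton_iff, Complex.nonneg_iff]
    exact ⟨fun h => ⟨h.1, h.2.symm⟩, fun h => ⟨h.1, h.2.symm⟩⟩
  rw [h3]
  exact (IsClosed.inter (isClosed_Ici.preimage Complex.continuous_re)
    (isClosed_singleton.preimage Complex.continuous_im)).preimage hc

lemma povm_entry_bound {F : Matrix (Fin n) (Fin n) ℂ} (hF : IsPOVMElem F) (i j : Fin n) :
    ‖F i j‖ ≤ 1 := by
  have hdiag : ∀ k, 0 ≤ (F k k).re ∧ (F k k).re ≤ 1 ∧ (F k k).im = 0 := by
    intro k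
    have h1 := Complex.nonneg_iff.mp (psd_entry_nonneg hF.1 k)
    have h2 := Complex.nonneg_iff.mp (psd_entry_nonneg hF.2 k)
    have h3 : ((1 : Matrix (Fin n) (Fin n) ℂ) - F) k k = 1 - F k k := by
      simp [Matrix.sub_apply, Matrix.one_apply]
    rw [h3] at h2
    refine ⟨h1.1, ?_, h1.2.symm⟩
    have := h2.1
    simp [Complex.sub_re] at this
    linarith
  by_cases hij : i = j
  · subst hij
    have h := hdiag i
    rw [Complex.norm_def, Complex.normSq_apply, h.2.2]
    rw [show (F i i).re * (F i i).re + 0 * 0 = (F i i).re ^ 2 by ring]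
    rw [Real.sqrt_sq h.1]
    exact h.2.1
  · by_cases h0 : F i j = 0
    · simp [h0]
    set a := F i j with ha
    set r : ℝ := ‖a‖ with hr
    have hr0 : 0 < r := by
      rw [hr]
      exact norm_pos_iff.mpr h0
    set θ : ℂ := -((starRingEnd ℂ) a) / (r : ℂ) with hθ
    set x : Fin n → ℂ := Pi.single i 1 + Pi.single j θ with hx
    have hstar : star x = Pi.single i 1 + Pi.single j ((starRingEnd ℂ) θ) := by
      rw [hx, star_add]
      congr 1
      · ext k; by_cases hk : k = i <;> simp [Pi.single_apply, hk]
      · ext k; by_cases hk : k = j <;> simp [Pi.single_apply, hk]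
    have hrne : (r : ℂ) ≠ 0 := by exact_mod_cast hr0.ne'
    have hform := hF.1.dotProduct_mulVec_nonneg x
    have hmv : F *ᵥ x = fun k => F k i + F k j * θ := by
      rw [hx, mulVec_add, mulVec_single, mulVec_single]
      funext k
      simp [mul_comm]
    have hz : star x ⬝ᵥ F *ᵥ x
        = F i i + a * θ + (starRingEnd ℂ) θ * (F j i + F j j * θ) := by
      rw [hstar, hmv, add_dotProduct, single_dotProduct, single_dotProduct, one_mul]
    have h4 : a * (starRingEnd ℂ) a = ((r ^ 2 : ℝ) : ℂ) := by
      rw [Complex.mul_conj, hr, Complex.normSq_eq_norm_sq]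
    have haθ : a * θ = -(r : ℂ) := by
      have h5 : a * (-((starRingEnd ℂ) a) / (r : ℂ)) = -(a * (starRingEnd ℂ) a) / (r : ℂ) := by
        ring
      rw [hθ, h5, h4, neg_div, neg_inj, div_eq_iff hrne]
      push_cast
      ring
    have hji : F j i = (starRingEnd ℂ) a := by
      have h5 : Fᴴ i j = F i j := by rw [hF.1.1]
      rw [Matrix.conjTranspose_apply, ← ha] at h5
      rw [← h5]
      simp
    have e2 : (starRingEnd ℂ) θ * (starRingEnd ℂ) a = -(r : ℂ) := by
      rw [← map_mul (starRingEnd ℂ), mul_comm, haθ]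
      simp [Complex.conj_ofReal]
    have e4 : (starRingEnd ℂ) θ * θ = 1 := by
      have habs : ‖θ‖ = 1 := by
        rw [hθ, norm_div]
        simp only [norm_neg, Complex.norm_conj, Complex.norm_real, Real.norm_eq_abs]
        rw [abs_of_pos hr0, ← hr, div_self hr0.ne']
      have h6 : Complex.normSq θ = 1 := by
        rw [Complex.normSq_eq_norm_sq, habs]
        norm_num
      rw [mul_comm, Complex.mul_conj, h6]
      norm_cast
    have hz2 : star x ⬝ᵥ F *ᵥ x = F i i + F j j - 2 * (r : ℂ) := by
      rw [hz, haθ, hji, mul_add, e2, mul_left_comm, e4, mul_one]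
      ring
    have hre := (Complex.nonneg_iff.mp hform).1
    rw [hz2] at hre
    have h7 : (F i i + F j j - 2 * (r : ℂ)).re = (F i i).re + (F j j).re - 2 * r := by
      simp
    rw [h7] at hre
    have hi := hdiag i
    have hj := hdiag j
    linarith [hi.2.1, hj.2.1]


lemma star_dot_self (x : Fin n → ℂ) :
    star x ⬝ᵥ x = ((∑ i, Complex.normSq (x i) : ℝ) : ℂ) := by
  push_cast
  simp [dotProduct, Complex.normSq_eq_conj_mul_self]

lemma vecmul_unitary_dot {U : Matrix (Fin n) (Fin n) ℂ} (hU : U ∈ Matrix.unitaryGroup (Fin n) ℂ)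
    (x : Fin n → ℂ) : star (star U *ᵥ x) ⬝ᵥ (star U *ᵥ x) = star x ⬝ᵥ x := by
  have h1 : U * Uᴴ = 1 := by
    rw [← star_eq_conjTranspose]; exact Matrix.mem_unitaryGroup_iff.mp hU
  rw [star_mulVec, star_eq_conjTranspose, conjTranspose_conjTranspose,
    dotProduct_mulVec, vecMul_vecMul, h1, vecMul_one]

lemma herm_form_eq {A : Matrix (Fin n) (Fin n) ℂ} (hA : A.IsHermitian) (x : Fin n → ℂ) :
    star x ⬝ᵥ A *ᵥ x
      = ∑ i, ((hA.eigenvalues i : ℂ) *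
          (Complex.normSq ((star (hA.eigenvectorUnitary : Matrix (Fin n) (Fin n) ℂ) *ᵥ x) i) : ℂ)) := by
  set U : Matrix (Fin n) (Fin n) ℂ := (hA.eigenvectorUnitary : Matrix (Fin n) (Fin n) ℂ) with hUdef
  set y := star U *ᵥ x with hy
  have h1 : star x ⬝ᵥ A *ᵥ x
      = star y ⬝ᵥ (Matrix.diagonal (RCLike.ofReal ∘ hA.eigenvalues) *ᵥ y) := by
    conv_lhs => rw [hA.spectral_theorem, Unitary.conjStarAlgAut_apply]
    rw [← mulVec_mulVec, ← mulVec_mulVec, dotProduct_mulVec, hy, star_mulVec,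
      star_eq_conjTranspose, conjTranspose_conjTranspose]
  rw [h1, dotProduct]
  refine Finset.sum_congr rfl fun i _ => ?_
  rw [mulVec_diagonal]
  simp only [Function.comp_apply, Pi.star_apply, Complex.star_def]
  rw [Complex.normSq_eq_conj_mul_self]
  exact mul_left_comm _ _ _

lemma psd_form_le {A : Matrix (Fin n) (Fin n) ℂ} (hA : A.PosSemidef) (x : Fin n → ℂ) :
    (star x ⬝ᵥ A *ᵥ x).re ≤ A.trace.re * ∑ i, Complex.normSq (x i) := by
  have hH := hA.1
  have h1 := herm_form_eq hH x
  set y := star (hH.eigenvectorUnitary : Matrix (Fin n) (Fin n) ℂ) *ᵥ x with hy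
  have htr : A.trace.re = ∑ i, hH.eigenvalues i := by
    have h0 : A.trace = (Matrix.diagonal (RCLike.ofReal ∘ hH.eigenvalues) : Matrix (Fin n) (Fin n) ℂ).trace := by
      conv_lhs => rw [hH.spectral_theorem, Unitary.conjStarAlgAut_apply]
      rw [Matrix.trace_mul_cycle, Matrix.mem_unitaryGroup_iff'.mp hH.eigenvectorUnitary.2,
        Matrix.one_mul]
    rw [h0, Matrix.trace_diagonal]
    simp
  have hnorm : ∑ i, Complex.normSq (y i) = ∑ i, Complex.normSq (x i) := by
    have h3 := vecmul_unitary_dot (U := (hH.eigenvectorUnitary : Matrix (Fin n) (Fin n) ℂ))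
      hH.eigenvectorUnitary.2 x
    rw [← hy] at h3
    have h4 : ((∑ i, Complex.normSq (y i) : ℝ) : ℂ) = ((∑ i, Complex.normSq (x i) : ℝ) : ℂ) := by
      rw [← star_dot_self, ← star_dot_self, h3]
    exact_mod_cast h4
  rw [h1]
  have hre : (∑ i, ((hH.eigenvalues i : ℂ) * (Complex.normSq (y i) : ℂ))).re
      = ∑ i, hH.eigenvalues i * Complex.normSq (y i) := by
    simp [Complex.re_sum]
  rw [hre, htr, Finset.sum_mul]
  refine Finset.sum_le_sum fun i _ => ?_
  have h5 : Complex.normSq (y i) ≤ ∑ j, Complex.normSq (x j) := by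
    rw [← hnorm]
    exact Finset.single_le_sum (fun j _ => Complex.normSq_nonneg _) (Finset.mem_univ i)
  exact mul_le_mul_of_nonneg_left h5 (hA.eigenvalues_nonneg i)

lemma exists_loewner {ρ σ : Matrix (Fin n) (Fin n) ℂ} (hρp : ρ.PosSemidef) (hρt : ρ.trace = 1)
    (hσp : σ.PosSemidef) (hsupp : SuppLE ρ σ) :
    ∃ c : ℝ, 1 ≤ c ∧ (((c : ℝ) : ℂ) • σ - ρ).PosSemidef := by
  classical
  have hH := hσp.1
  set U : Matrix (Fin n) (Fin n) ℂ := (hH.eigenvectorUnitary : Matrix (Fin n) (Fin n) ℂ) with hUdef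
  set q : Fin n → ℝ := hH.eigenvalues with hqdef
  have hqnn : ∀ i, 0 ≤ q i := fun i => hσp.eigenvalues_nonneg i
  set c' : ℝ := ∑ i, (if 0 < q i then (q i)⁻¹ else 0) with hc'
  have hc'0 : 0 ≤ c' := Finset.sum_nonneg fun i _ => by
    split
    · exact inv_nonneg.mpr (le_of_lt (by assumption))
    · exact le_rfl
  have hUU : U * star U = 1 := Matrix.mem_unitaryGroup_iff.mp hH.eigenvectorUnitary.2
  have hU'U : star U * U = 1 := Matrix.mem_unitaryGroup_iff'.mp hH.eigenvectorUnitary.2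
  have key : ∀ v : Fin n → ℂ,
      (star v ⬝ᵥ ρ *ᵥ v).re ≤ (c' + 1) * (star v ⬝ᵥ σ *ᵥ v).re := by
    intro v
    set w : Fin n → ℂ := star U *ᵥ v with hwdef
    have hσ1 := herm_form_eq hH v
    have hσre : (star v ⬝ᵥ σ *ᵥ v).re = ∑ i, q i * Complex.normSq (w i) := by
      rw [hσ1]
      simp [Complex.re_sum, hwdef, hUdef, hqdef]
    have hσnn : 0 ≤ ∑ i, q i * Complex.normSq (w i) :=
      Finset.sum_nonneg fun i _ => mul_nonneg (hqnn i) (Complex.normSq_nonneg _)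
    set wZ : Fin n → ℂ := fun i => if q i = 0 then w i else 0 with hwZ
    set wP : Fin n → ℂ := fun i => if q i = 0 then 0 else w i with hwP
    have hw : w = wZ + wP := by
      funext i
      by_cases h : q i = 0 <;> simp [hwZ, hwP, h]
    set vZ : Fin n → ℂ := U *ᵥ wZ with hvZ
    set vP : Fin n → ℂ := U *ᵥ wP with hvP
    have hv : v = vZ + vP := by
      have : U *ᵥ w = v := by
        rw [hwdef, mulVec_mulVec, hUU, one_mulVec]
      rw [← this, hw, mulVec_add]
    have hσZ : σ *ᵥ vZ = 0 := by
      have hDz : Matrix.diagonal (RCLike.ofReal ∘ hH.eigenvalues) *ᵥ wZ = 0 := by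
        funext i
        rw [mulVec_diagonal]
        by_cases h : q i = 0
        · have h7 : (RCLike.ofReal ∘ hH.eigenvalues) i = ((q i : ℝ) : ℂ) := rfl
          rw [h7, h]
          simp
        · simp [hwZ, h]
      conv_lhs => rw [hH.spectral_theorem, Unitary.conjStarAlgAut_apply]
      rw [hvZ, mulVec_mulVec, Matrix.mul_assoc (U * _), ← hUdef, hU'U, Matrix.mul_one,
        ← mulVec_mulVec, hDz, mulVec_zero]
    have hρZ : ρ *ᵥ vZ = 0 := hsupp vZ hσZ
    have hcross : star vZ ⬝ᵥ ρ *ᵥ vP = 0 := by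
      rw [dotProduct_mulVec]
      have h6 : star (ρ *ᵥ vZ) = star vZ ᵥ* ρ := by
        have h7 := star_mulVec ρ vZ
        rw [hρp.1.eq] at h7
        exact h7
      rw [← h6, hρZ, star_zero, zero_dotProduct]
    have hsplit : star v ⬝ᵥ ρ *ᵥ v = star vP ⬝ᵥ ρ *ᵥ vP := by
      rw [hv, mulVec_add, hρZ, zero_add, star_add, add_dotProduct, hcross, zero_add]
    have hnormP : ∑ i, Complex.normSq (vP i) = ∑ i, Complex.normSq (wP i) := by
      have hUstar : star U ∈ Matrix.unitaryGroup (Fin n) ℂ := by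
        rw [Matrix.mem_unitaryGroup_iff, star_star]
        exact hU'U
      have h3 := vecmul_unitary_dot (U := star U) hUstar wP
      rw [star_star] at h3
      have h4 : ((∑ i, Complex.normSq (vP i) : ℝ) : ℂ) = ((∑ i, Complex.normSq (wP i) : ℝ) : ℂ) := by
        rw [← star_dot_self, ← star_dot_self, hvP, h3]
      exact_mod_cast h4
    have hbound : (star vP ⬝ᵥ ρ *ᵥ vP).re ≤ ∑ i, Complex.normSq (wP i) := by
      have := psd_form_le hρp vP
      rw [hρt] at this
      simpa [hnormP] using this
    have hwPle : ∑ i, Complex.normSq (wP i) ≤ c' * ∑ i, q i * Complex.normSq (w i) := by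
      rw [Finset.mul_sum]
      refine Finset.sum_le_sum fun i _ => ?_
      by_cases h : q i = 0
      · simp [hwP, h]
      · have hqi : 0 < q i := lt_of_le_of_ne (hqnn i) (Ne.symm h)
        have hc'i : (q i)⁻¹ ≤ c' := by
          rw [hc']
          have := Finset.single_le_sum
            (f := fun j => if 0 < q j then (q j)⁻¹ else 0)
            (fun j _ => by by_cases hj : 0 < q j <;> simp [hj] <;> positivity) (Finset.mem_univ i)
          simpa [hqi] using this
        have : Complex.normSq (wP i) = (q i)⁻¹ * (q i * Complex.normSq (w i)) := by
          simp only [hwP, h, if_false]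
          field_simp
        rw [this]
        exact mul_le_mul_of_nonneg_right hc'i
          (mul_nonneg (hqnn i) (Complex.normSq_nonneg _))
    calc (star v ⬝ᵥ ρ *ᵥ v).re = (star vP ⬝ᵥ ρ *ᵥ vP).re := by rw [hsplit]
      _ ≤ ∑ i, Complex.normSq (wP i) := hbound
      _ ≤ c' * ∑ i, q i * Complex.normSq (w i) := hwPle
      _ ≤ (c' + 1) * ∑ i, q i * Complex.normSq (w i) := by nlinarith
      _ = (c' + 1) * (star v ⬝ᵥ σ *ᵥ v).re := by rw [hσre]
  refine ⟨c' + 1, by linarith, .of_dotProduct_mulVec_nonneg ?_ ?_⟩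
  · -- Hermitian
    rw [Matrix.IsHermitian, conjTranspose_sub, conjTranspose_smul, hσp.1.eq, hρp.1.eq]
    congr 1
    rw [Complex.star_def, Complex.conj_ofReal]
  · intro v
    have h2 := key v
    have ha := hσp.dotProduct_mulVec_nonneg v
    have hb := hρp.dotProduct_mulVec_nonneg v
    rw [Complex.nonneg_iff] at ha hb ⊢
    rw [sub_mulVec, smul_mulVec, dotProduct_sub, dotProduct_smul, smul_eq_mul]
    constructor
    · rw [Complex.sub_re, Complex.re_ofReal_mul]
      linarith [ha.1, hb.1]
    · rw [Complex.sub_im, Complex.im_ofReal_mul, ← ha.2, ← hb.2]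
      ring


lemma isCompact_povm : IsCompact {F : Matrix (Fin n) (Fin n) ℂ | IsPOVMElem F} := by
  have hclosed : IsClosed {F : Matrix (Fin n) (Fin n) ℂ | IsPOVMElem F} := by
    have h : {F : Matrix (Fin n) (Fin n) ℂ | IsPOVMElem F}
        = {F : Matrix (Fin n) (Fin n) ℂ | F.PosSemidef}
          ∩ (fun F : Matrix (Fin n) (Fin n) ℂ => 1 - F) ⁻¹'
            {G : Matrix (Fin n) (Fin n) ℂ | G.PosSemidef} := rfl
    rw [h]
    exact isClosed_psd.inter (isClosed_psd.preimage (continuous_const.sub continuous_id))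
  have hsub : {F : Matrix (Fin n) (Fin n) ℂ | IsPOVMElem F} ⊆
      Set.pi Set.univ (fun _ : Fin n => Set.pi Set.univ
        fun _ : Fin n => Metric.closedBall (0 : ℂ) 1) := by
    intro F hFm
    refine Set.mem_univ_pi.mpr ?_
    intro i
    rw [Set.mem_univ_pi]
    intro j
    rw [Metric.mem_closedBall, dist_zero_right]
    exact povm_entry_bound hFm i j
  exact IsCompact.of_isClosed_subset
    (isCompact_univ_pi fun _ => isCompact_univ_pi fun _ => isCompact_closedBall _ _)
    hclosed hsub

theorem obsDiv_attained' (ρ σ : Matrix (Fin n) (Fin n) ℂ)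
    (hρ : IsState ρ) (hσ : IsState σ) (hsupp : SuppLE ρ σ) :
    ∃ F : Matrix (Fin n) (Fin n) ℂ, IsPOVMElem F ∧ trR F σ ≠ 0 ∧
      (∀ G : Matrix (Fin n) (Fin n) ℂ, IsPOVMElem G → trR G σ ≠ 0 →
        trR G ρ * Real.logb 2 (trR G ρ / trR G σ) ≤
          trR F ρ * Real.logb 2 (trR F ρ / trR F σ)) ∧
      obsDiv ρ σ = trR F ρ * Real.logb 2 (trR F ρ / trR F σ) := by
  obtain ⟨hρp, hρt⟩ := hρ
  obtain ⟨hσp, hσt⟩ := hσ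
  obtain ⟨c, hc1, hpsd⟩ := exists_loewner hρp hρt hσp hsupp
  set K := {F : Matrix (Fin n) (Fin n) ℂ | IsPOVMElem F} with hK
  set g : Matrix (Fin n) (Fin n) ℂ → ℝ :=
    fun F => trR F ρ * Real.logb 2 (trR F ρ / trR F σ) with hg
  -- basic facts on K
  have hpnn : ∀ F, IsPOVMElem F → 0 ≤ trR F ρ := fun F hF => trR_nonneg hF.1 hρp
  have hqnn : ∀ F, IsPOVMElem F → 0 ≤ trR F σ := fun F hF => trR_nonneg hF.1 hσp
  have hpq : ∀ F, IsPOVMElem F → trR F ρ ≤ c * trR F σ := fun F hF => trR_le_c hpsd hF.1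
  have hqle1 : ∀ F, IsPOVMElem F → trR F σ ≤ 1 := fun F hF => trR_le_one hF hσp hσt
  have hpzero : ∀ F, IsPOVMElem F → trR F σ = 0 → trR F ρ = 0 := by
    intro F hF h0
    have h1 := hpq F hF
    rw [h0, mul_zero] at h1
    exact le_antisymm h1 (hpnn F hF)
  -- identity for g on K
  have hgid : ∀ F ∈ K, g F = trR F ρ * Real.logb 2 (trR F ρ)
      - trR F ρ * Real.logb 2 (trR F σ) := by
    intro F hF
    by_cases hq : trR F σ = 0
    · have hp := hpzero F hF hq
      simp [hg, hp]
    · by_cases hp : trR F ρ = 0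
      · simp [hg, hp]
      · rw [hg]
        simp only []
        rw [Real.logb_div hp hq, mul_sub]
  -- continuity
  have hcont1 : Continuous fun F : Matrix (Fin n) (Fin n) ℂ =>
      trR F ρ * Real.logb 2 (trR F ρ) := by
    have h1 : Continuous fun t : ℝ => t * Real.logb 2 t := by
      have h2 : (fun t : ℝ => t * Real.logb 2 t)
          = fun t : ℝ => (t * Real.log t) / Real.log 2 := by
        funext t
        rw [Real.logb]
        ring
      rw [h2]
      exact Real.continuous_mul_log.div_const _
    exact h1.comp (continuous_trR ρ)
  have hcont2 : ContinuousOn (fun F : Matrix (Fin n) (Fin n) ℂ =>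
      trR F ρ * Real.logb 2 (trR F σ)) K := by
    intro F₀ hF₀
    by_cases hq0 : trR F₀ σ = 0
    · have hp0 : trR F₀ ρ = 0 := hpzero F₀ hF₀ hq0
      have hval : trR F₀ ρ * Real.logb 2 (trR F₀ σ) = 0 := by rw [hp0, zero_mul]
      rw [ContinuousWithinAt, hval]
      have hlow : Filter.Tendsto (fun F : Matrix (Fin n) (Fin n) ℂ =>
          c * (trR F σ * Real.logb 2 (trR F σ))) (nhdsWithin F₀ K) (nhds 0) := by
        have h3 : Continuous fun F : Matrix (Fin n) (Fin n) ℂ =>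
            c * (trR F σ * Real.logb 2 (trR F σ)) := by
          have h4 : Continuous fun t : ℝ => t * Real.logb 2 t := by
            have h5 : (fun t : ℝ => t * Real.logb 2 t)
                = fun t : ℝ => (t * Real.log t) / Real.log 2 := by
              funext t; rw [Real.logb]; ring
            rw [h5]
            exact Real.continuous_mul_log.div_const _
          exact continuous_const.mul (h4.comp (continuous_trR σ))
        have h6 := (h3.tendsto F₀).mono_left (nhdsWithin_le_nhds (s := K))
        have h7 : c * (trR F₀ σ * Real.logb 2 (trR F₀ σ)) = 0 := by
          rw [hq0]; simp
        rwa [h7] at h6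
      refine tendsto_of_tendsto_of_tendsto_of_le_of_le' hlow tendsto_const_nhds ?_ ?_
      · filter_upwards [self_mem_nhdsWithin] with F hFK
        have hFK' : IsPOVMElem F := hFK
        have hL : Real.logb 2 (trR F σ) ≤ 0 :=
          Real.logb_nonpos one_lt_two (hqnn F hFK') (hqle1 F hFK')
        calc c * (trR F σ * Real.logb 2 (trR F σ))
            = (c * trR F σ) * Real.logb 2 (trR F σ) := by ring
          _ ≤ trR F ρ * Real.logb 2 (trR F σ) :=
              mul_le_mul_of_nonpos_right (hpq F hFK') hL
      · filter_upwards [self_mem_nhdsWithin] with F hFK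
        have hFK' : IsPOVMElem F := hFK
        have hL : Real.logb 2 (trR F σ) ≤ 0 :=
          Real.logb_nonpos one_lt_two (hqnn F hFK') (hqle1 F hFK')
        exact mul_nonpos_of_nonneg_of_nonpos (hpnn F hFK') hL
    · have hlogb : ContinuousAt (fun F : Matrix (Fin n) (Fin n) ℂ => Real.logb 2 (trR F σ)) F₀ :=
        Filter.Tendsto.comp (Real.continuousAt_logb hq0) ((continuous_trR σ).continuousAt)
      exact (((continuous_trR ρ).continuousAt).mul hlogb).continuousWithinAt
  have hgcont : ContinuousOn g K := by
    refine ContinuousOn.congr ((hcont1.continuousOn).sub hcont2) ?_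
    intro F hF
    exact hgid F hF
  -- compactness & max
  have h1povm : IsPOVMElem (1 : Matrix (Fin n) (Fin n) ℂ) :=
    ⟨Matrix.PosSemidef.one, by rw [sub_self]; exact Matrix.PosSemidef.zero⟩
  have hKne : K.Nonempty := ⟨1, h1povm⟩
  obtain ⟨F₀, hF₀K, hmax⟩ := isCompact_povm.exists_isMaxOn hKne hgcont
  have hF₀ : IsPOVMElem F₀ := hF₀K
  have hq1 : trR (1 : Matrix (Fin n) (Fin n) ℂ) σ = 1 := by
    rw [trR, Matrix.one_mul, hσt, Complex.one_re]
  have hp1 : trR (1 : Matrix (Fin n) (Fin n) ℂ) ρ = 1 := by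
    rw [trR, Matrix.one_mul, hρt, Complex.one_re]
  have hg1 : g 1 = 0 := by
    rw [hg]
    simp only [hp1, hq1]
    norm_num
  by_cases hq0 : trR F₀ σ = 0
  · -- maximum value is 0; use F = 1
    have hgF₀ : g F₀ = 0 := by
      have := hpzero F₀ hF₀ hq0
      rw [hg]; simp [this]
    refine ⟨1, h1povm, by rw [hq1]; norm_num, ?_, ?_⟩
    · intro G hG hGq
      have h8 := hmax (Set.mem_setOf_eq ▸ hG : G ∈ K)
      rw [hgF₀] at h8
      calc trR G ρ * Real.logb 2 (trR G ρ / trR G σ) = g G := rfl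
        _ ≤ 0 := h8
        _ = g 1 := hg1.symm
        _ = trR 1 ρ * Real.logb 2 (trR 1 ρ / trR 1 σ) := rfl
    · have hgreatest : IsGreatest {x : ℝ | ∃ F : Matrix (Fin n) (Fin n) ℂ, IsPOVMElem F ∧
          trR F σ ≠ 0 ∧ x = trR F ρ * Real.logb 2 (trR F ρ / trR F σ)}
          (trR 1 ρ * Real.logb 2 (trR 1 ρ / trR 1 σ)) := by
        constructor
        · exact ⟨1, h1povm, by rw [hq1]; norm_num, rfl⟩
        · rintro x ⟨G, hG, hGq, rfl⟩
          have h8 := hmax (hG : G ∈ K)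
          rw [hgF₀] at h8
          calc trR G ρ * Real.logb 2 (trR G ρ / trR G σ) = g G := rfl
            _ ≤ 0 := h8
            _ = g 1 := hg1.symm
            _ = trR 1 ρ * Real.logb 2 (trR 1 ρ / trR 1 σ) := rfl
      exact hgreatest.csSup_eq
  · refine ⟨F₀, hF₀, hq0, ?_, ?_⟩
    · intro G hG hGq
      exact hmax (hG : G ∈ K)
    · have hgreatest : IsGreatest {x : ℝ | ∃ F : Matrix (Fin n) (Fin n) ℂ, IsPOVMElem F ∧
          trR F σ ≠ 0 ∧ x = trR F ρ * Real.logb 2 (trR F ρ / trR F σ)}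
          (trR F₀ ρ * Real.logb 2 (trR F₀ ρ / trR F₀ σ)) := by
        constructor
        · exact ⟨F₀, hF₀, hq0, rfl⟩
        · rintro x ⟨G, hG, hGq, rfl⟩
          exact hmax (hG : G ∈ K)
      exact hgreatest.csSup_eq


end ObsAux

/-- Attainment of the observational divergence supremum. -/
theorem obsDiv_attained {n : ℕ} (ρ σ : Matrix (Fin n) (Fin n) ℂ)
    (hρ : IsState ρ) (hσ : IsState σ) (hsupp : SuppLE ρ σ) :
    ∃ F : Matrix (Fin n) (Fin n) ℂ, IsPOVMElem F ∧ trR F σ ≠ 0 ∧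
      (∀ G : Matrix (Fin n) (Fin n) ℂ, IsPOVMElem G → trR G σ ≠ 0 →
        trR G ρ * Real.logb 2 (trR G ρ / trR G σ) ≤
          trR F ρ * Real.logb 2 (trR F ρ / trR F σ)) ∧
      obsDiv ρ σ = trR F ρ * Real.logb 2 (trR F ρ / trR F σ) :=
  ObsAux.obsDiv_attained' ρ σ hρ hσ hsupp

end
end

section
/- Monotonicity of observational divergence under partial trace: Let ρ' and σ' be quantum states on ℂ^n ⊗ ℂ^m (indexed by Fin n × Fin m) with supp(ρ') ⊆ supp(σ'), and let ρ and σ be their partial traces over the second factor, i.e., ρ i j = ∑ k, ρ' (i,k) (j,k) and σ i j = ∑ k, σ' (i,k) (j,k). Then for every POVM element F on ℂ^n with Tr(Fσ) ≠ 0, Tr(Fρ)·logb 2 (Tr(Fρ)/Tr(Fσ)) ≤ D(ρ'‖σ'); i.e., D(ρ‖σ) ≤ D(ρ'‖σ'). -/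
open Matrix BigOperators
open scoped ComplexOrder

noncomputable section

lemma posSemidef_exists_conjTranspose_mul_self {d : Type*} [Fintype d] {A : Matrix d d ℂ}
    (hA : A.PosSemidef) : ∃ C : Matrix d d ℂ, A = Cᴴ * C := by
  classical
  open scoped MatrixOrder in
  obtain ⟨C, hC⟩ := CStarAlgebra.nonneg_iff_eq_star_mul_self.mp hA.nonneg
  exact ⟨C, hC⟩

lemma trace_mul_re_nonneg {d : Type*} [Fintype d] {A B : Matrix d d ℂ}
    (hA : A.PosSemidef) (hB : B.PosSemidef) : 0 ≤ (A*B).trace.re := by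
  obtain ⟨C, rfl⟩ := posSemidef_exists_conjTranspose_mul_self hA
  obtain ⟨D, rfl⟩ := posSemidef_exists_conjTranspose_mul_self hB
  have h : (Cᴴ * C * (Dᴴ * D)).trace = ((D * Cᴴ)ᴴ * (D * Cᴴ)).trace := by
    have e1 : Cᴴ * C * (Dᴴ * D) = Cᴴ * (C * Dᴴ * D) := by noncomm_ring
    have e2 : (D * Cᴴ)ᴴ * (D * Cᴴ) = C * Dᴴ * D * Cᴴ := by
      rw [Matrix.conjTranspose_mul, Matrix.conjTranspose_conjTranspose]; noncomm_ring
    rw [e1, e2, Matrix.trace_mul_comm]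
  rw [h]
  set M := D * Cᴴ with hM
  clear_value M
  rw [Matrix.trace]
  simp only [Matrix.diag_apply, Matrix.mul_apply, Matrix.conjTranspose_apply]
  rw [Complex.re_sum]
  apply Finset.sum_nonneg
  intro i _
  rw [Complex.re_sum]
  apply Finset.sum_nonneg
  intro j _
  have : (star (M j i) * M j i).re = Complex.normSq (M j i) := by
    simp [Complex.normSq, Complex.mul_re]
  rw [this]
  exact Complex.normSq_nonneg _

lemma trace_smul_one_sub_posSemidef {d : Type*} [Fintype d] [DecidableEq d]
    {ρ : Matrix d d ℂ} (hρ : ρ.PosSemidef) :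
    (((ρ.trace.re : ℝ) : ℂ) • (1 : Matrix d d ℂ) - ρ).PosSemidef := by
  have hH := hρ.isHermitian
  set t : ℝ := ρ.trace.re with ht
  have hVV : (hH.eigenvectorUnitary : Matrix d d ℂ) * star (hH.eigenvectorUnitary : Matrix d d ℂ) = 1 :=
    (Matrix.mem_unitaryGroup_iff).mp hH.eigenvectorUnitary.2
  have hVV' : star (hH.eigenvectorUnitary : Matrix d d ℂ) * (hH.eigenvectorUnitary : Matrix d d ℂ) = 1 :=
    (Matrix.mem_unitaryGroup_iff').mp hH.eigenvectorUnitary.2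
  have htrace : ρ.trace = ∑ i, (hH.eigenvalues i : ℂ) := by
    conv_lhs => rw [hH.spectral_theorem, Unitary.conjStarAlgAut_apply]
    rw [Matrix.trace_mul_cycle, hVV', one_mul, Matrix.trace_diagonal]
    rfl
  have hdiag : Matrix.diagonal (fun i => ((t - hH.eigenvalues i : ℝ) : ℂ))
      = (t : ℂ) • (1 : Matrix d d ℂ) - Matrix.diagonal (fun i => (hH.eigenvalues i : ℂ)) := by
    rw [Matrix.smul_one_eq_diagonal, Matrix.diagonal_sub]
    congr 1
    ext i
    push_cast
    ring
  have hkey : ((t : ℂ)) • (1 : Matrix d d ℂ) - ρ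
      = (hH.eigenvectorUnitary : Matrix d d ℂ) *
          Matrix.diagonal (fun i => ((t - hH.eigenvalues i : ℝ) : ℂ)) *
          (star (hH.eigenvectorUnitary : Matrix d d ℂ)) := by
    rw [hdiag, Matrix.mul_sub, Matrix.sub_mul]
    congr 1
    · rw [Matrix.mul_smul, mul_one, smul_mul_assoc, hVV]
    · conv_lhs => rw [hH.spectral_theorem, Unitary.conjStarAlgAut_apply]
      rfl
  rw [hkey, Matrix.star_eq_conjTranspose]
  apply Matrix.PosSemidef.mul_mul_conjTranspose_same
  apply Matrix.PosSemidef.diagonal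
  intro i
  show (0:ℂ) ≤ _
  rw [Complex.zero_le_real, sub_nonneg, ht]
  calc hH.eigenvalues i ≤ ∑ j, hH.eigenvalues j := by
        apply Finset.single_le_sum (f := fun j => hH.eigenvalues j)
        · intro j _; exact hρ.eigenvalues_nonneg j
        · exact Finset.mem_univ i
    _ = ρ.trace.re := by
        rw [htrace, Complex.re_sum]; simp

lemma exists_scale_posSemidef {d : Type*} [Fintype d] [DecidableEq d] [Nonempty d]
    {ρ σ : Matrix d d ℂ} (hρ : ρ.PosSemidef) (hσ : σ.PosSemidef)
    (hsupp : ∀ v : d → ℂ, σ *ᵥ v = 0 → ρ *ᵥ v = 0) :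
    ∃ c : ℝ, 0 < c ∧ (((c : ℝ) : ℂ) • σ - ρ).PosSemidef := by
  classical
  have hH := hσ.isHermitian
  set U : Matrix d d ℂ := (hH.eigenvectorUnitary : Matrix d d ℂ) with hU
  set μ : d → ℝ := hH.eigenvalues with hμ
  have hUU : U * star U = 1 := (Matrix.mem_unitaryGroup_iff).mp hH.eigenvectorUnitary.2
  have hUU' : star U * U = 1 := (Matrix.mem_unitaryGroup_iff').mp hH.eigenvectorUnitary.2
  set lam : ℝ := Finset.univ.inf' Finset.univ_nonempty (fun i => if μ i = 0 then 1 else μ i)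
    with hlam
  have hlampos : 0 < lam := by
    rw [hlam, Finset.lt_inf'_iff]
    intro i _
    by_cases h : μ i = 0
    · simp [h]
    · simpa [h] using lt_of_le_of_ne (hσ.eigenvalues_nonneg i) (Ne.symm h)
  have hlamle : ∀ i, μ i ≠ 0 → lam ≤ μ i := by
    intro i hi
    have h := Finset.inf'_le (fun j => if μ j = 0 then 1 else μ j) (Finset.mem_univ i)
    rw [if_neg hi] at h
    exact h
  set t : ℝ := ρ.trace.re with htdef
  have ht0 : 0 ≤ t := by
    have := trace_mul_re_nonneg Matrix.PosSemidef.one hρ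
    rwa [one_mul] at this
  refine ⟨t / lam + 1, by positivity, ?_⟩
  have hc0 : (0:ℝ) ≤ t / lam + 1 := by positivity
  set c : ℝ := t / lam + 1 with hcdef
  rw [Matrix.posSemidef_iff_dotProduct_mulVec]
  constructor
  · -- Hermitian
    show _ = _
    rw [Matrix.conjTranspose_sub, Matrix.conjTranspose_smul, hρ.isHermitian.eq,
      Complex.star_def, Complex.conj_ofReal, hσ.isHermitian.eq]
  intro x
  rw [Matrix.sub_mulVec, dotProduct_sub, Matrix.smul_mulVec,
    dotProduct_smul]
  rw [sub_nonneg]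
  -- decompose
  set w : d → ℂ := star U *ᵥ x with hw
  set w₀ : d → ℂ := fun i => if μ i = 0 then w i else 0 with hw0
  set w₁ : d → ℂ := fun i => if μ i = 0 then 0 else w i with hw1
  have hwsum : w = w₀ + w₁ := by
    funext i; by_cases h : μ i = 0 <;> simp [hw0, hw1, h]
  have hx : x = U *ᵥ w := by
    rw [hw, Matrix.mulVec_mulVec, hUU, Matrix.one_mulVec]
  set x₀ : d → ℂ := U *ᵥ w₀ with hx0
  set x₁ : d → ℂ := U *ᵥ w₁ with hx1
  have hxsum : x = x₀ + x₁ := by rw [hx0, hx1, ← Matrix.mulVec_add, ← hwsum, hx]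
  have hσx0 : σ *ᵥ x₀ = 0 := by
    conv_lhs => rw [hH.spectral_theorem, Unitary.conjStarAlgAut_apply]
    rw [hx0, Matrix.mulVec_mulVec, ← hU]
    rw [mul_assoc, mul_assoc]
    rw [← Matrix.mulVec_mulVec (M := U)]
    have : (Matrix.diagonal (RCLike.ofReal ∘ μ) * (star U * U)) *ᵥ w₀ = 0 := by
      rw [hUU', mul_one]
      funext i
      rw [Matrix.mulVec_diagonal]
      by_cases h : μ i = 0 <;> simp [hw0, h]
    rw [← Matrix.mulVec_mulVec] at this ⊢
    rw [this, Matrix.mulVec_zero]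
  have hρx0 : ρ *ᵥ x₀ = 0 := hsupp _ hσx0
  -- reduce lhs to x₁
  have hquad : star x ⬝ᵥ ρ *ᵥ x = star x₁ ⬝ᵥ ρ *ᵥ x₁ := by
    rw [hxsum]
    rw [Matrix.mulVec_add, hρx0, zero_add, star_add, add_dotProduct]
    have : star x₀ ⬝ᵥ ρ *ᵥ x₁ = 0 := by
      rw [Matrix.dotProduct_mulVec]
      have : star x₀ ᵥ* ρ = 0 := by
        rw [← hρ.isHermitian.eq, ← Matrix.star_mulVec, hρx0, star_zero]
      rw [this, zero_dotProduct]
    rw [this, zero_add]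
  rw [hquad]
  -- upper bound via trace
  have hD : star x₁ ⬝ᵥ ρ *ᵥ x₁ ≤ (t : ℂ) * (star x₁ ⬝ᵥ x₁) := by
    have h2 := (trace_smul_one_sub_posSemidef hρ).dotProduct_mulVec_nonneg x₁
    rw [Matrix.sub_mulVec, dotProduct_sub, Matrix.smul_mulVec,
      Matrix.one_mulVec, dotProduct_smul, sub_nonneg] at h2
    simpa using h2
  refine le_trans hD ?_
  -- norms in eigencoordinates
  have hnorm : star x₁ ⬝ᵥ x₁ = star w₁ ⬝ᵥ w₁ := by
    rw [hx1, Matrix.star_mulVec, Matrix.dotProduct_mulVec, Matrix.vecMul_vecMul,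
      ← Matrix.star_eq_conjTranspose, hUU', Matrix.vecMul_one]
  have hsw : star x ᵥ* U = star w := by
    rw [hw, Matrix.star_mulVec, ← Matrix.star_eq_conjTranspose, star_star]
  have hform : star x ⬝ᵥ σ *ᵥ x = ∑ i, (μ i : ℂ) * (star (w i) * w i) := by
    conv_lhs => rw [hH.spectral_theorem, Unitary.conjStarAlgAut_apply]
    rw [← hU, ← Matrix.mulVec_mulVec, ← Matrix.mulVec_mulVec, ← hw]
    rw [Matrix.dotProduct_mulVec, hsw]
    simp only [dotProduct, Matrix.mulVec_diagonal, Function.comp_apply, Pi.star_apply]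
    apply Finset.sum_congr rfl
    intro i _
    show star (w i) * ((μ i : ℂ) * w i) = _
    ring
  rw [hnorm, hform, smul_eq_mul, dotProduct, Finset.mul_sum, Finset.mul_sum]
  apply Finset.sum_le_sum
  intro i _
  by_cases h : μ i = 0
  · simp [hw1, h]
  · have hterm : star (w₁ i) * w₁ i = star (w i) * w i := by simp [hw1, h]
    rw [Pi.star_apply, hterm]
    have hmc : star (w i) * w i = ((Complex.normSq (w i) : ℝ) : ℂ) := by
      rw [Complex.star_def, mul_comm, Complex.mul_conj]
    rw [hmc, ← mul_assoc]
    rw [← Complex.ofReal_mul, ← Complex.ofReal_mul, ← Complex.ofReal_mul,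
      Complex.real_le_real]
    have h1 : t ≤ c * μ i := by
      have h2 : t / lam * lam ≤ t / lam * μ i :=
        mul_le_mul_of_nonneg_left (hlamle i h) (by positivity)
      rw [div_mul_cancel₀ t hlampos.ne'] at h2
      have h3 : 0 ≤ μ i := hσ.eigenvalues_nonneg i
      calc t ≤ t / lam * μ i := h2
        _ ≤ (t / lam + 1) * μ i := by nlinarith
        _ = c * μ i := by rw [hcdef]
    exact mul_le_mul_of_nonneg_right h1 (Complex.normSq_nonneg _)

lemma logb_bound {p q c : ℝ} (hp0 : 0 ≤ p) (hp1 : p ≤ 1) (hq : 0 < q) (hpc : p ≤ c * q) :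
    p * Real.logb 2 (p / q) ≤ max 0 (Real.logb 2 c) := by
  rcases le_or_gt p q with h | h
  · refine le_trans ?_ (le_max_left _ _)
    apply mul_nonpos_of_nonneg_of_nonpos hp0
    apply Real.logb_nonpos (by norm_num) (by positivity)
    rw [div_le_one hq]
    exact h
  · refine le_trans ?_ (le_max_right _ _)
    have hp : 0 < p := lt_trans hq h
    have h1 : (1:ℝ) ≤ p / q := by rw [le_div_iff₀ hq]; linarith
    have hdc : p / q ≤ c := by rw [div_le_iff₀ hq]; linarith [hpc]
    calc p * Real.logb 2 (p/q) ≤ 1 * Real.logb 2 (p/q) := by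
          apply mul_le_mul_of_nonneg_right hp1
          exact Real.logb_nonneg (by norm_num) h1
      _ = Real.logb 2 (p/q) := one_mul _
      _ ≤ Real.logb 2 c := Real.logb_le_logb_of_le (by norm_num) (by positivity) hdc

lemma kron_posSemidef {n m : ℕ} {G : Matrix (Fin n) (Fin n) ℂ} (hG : G.PosSemidef) :
    (Matrix.of fun (p q : Fin n × Fin m) => G p.1 q.1 * (if p.2 = q.2 then 1 else 0)).PosSemidef := by
  rw [Matrix.posSemidef_iff_dotProduct_mulVec]
  constructor
  · ext p q
    simp only [Matrix.conjTranspose_apply, Matrix.of_apply]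
    rw [← hG.isHermitian.apply q.1 p.1]
    by_cases h : p.2 = q.2
    · simp [h]
    · simp only [if_neg h, if_neg (fun hh : q.2 = p.2 => h hh.symm), star_zero, mul_zero]
  · intro v
    have key : star v ⬝ᵥ ((Matrix.of fun (p q : Fin n × Fin m) =>
        G p.1 q.1 * (if p.2 = q.2 then 1 else 0)) *ᵥ v)
        = ∑ k : Fin m, (star (fun i => v (i,k)) ⬝ᵥ (G *ᵥ (fun i => v (i,k)))) := by
      simp only [dotProduct, Matrix.mulVec, Matrix.of_apply, Pi.star_apply,
        Fintype.sum_prod_type, mul_ite, mul_one, mul_zero, Finset.sum_ite_eq',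
        Finset.mem_univ, if_true]
      rw [Finset.sum_comm]
      apply Finset.sum_congr rfl
      intro k _
      apply Finset.sum_congr rfl
      intro i _
      simp only [ite_mul, zero_mul, Finset.sum_ite_eq, Finset.mem_univ, if_true]
    rw [key]
    apply Finset.sum_nonneg
    intro k _
    exact hG.dotProduct_mulVec_nonneg _

lemma kron_trace_eq {n m : ℕ} (F : Matrix (Fin n) (Fin n) ℂ)
    (ρ' : Matrix (Fin n × Fin m) (Fin n × Fin m) ℂ) (ρ : Matrix (Fin n) (Fin n) ℂ)
    (hρ : ∀ i j, ρ i j = ∑ l : Fin m, ρ' (i, l) (j, l)) :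
    ((Matrix.of fun (p q : Fin n × Fin m) => F p.1 q.1 * (if p.2 = q.2 then 1 else 0)) * ρ').trace
      = (F * ρ).trace := by
  simp only [Matrix.trace, Matrix.diag_apply, Matrix.mul_apply, Matrix.of_apply,
    Fintype.sum_prod_type, mul_ite, mul_one, mul_zero]
  simp only [ite_mul, zero_mul, Finset.sum_ite_eq, Finset.mem_univ, if_true]
  apply Finset.sum_congr rfl
  intro i _
  rw [Finset.sum_comm]
  apply Finset.sum_congr rfl
  intro j _
  rw [hρ j i, Finset.mul_sum]

/-- Monotonicity of observational divergence under partial trace. -/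
theorem obsDiv_partialTrace_mono {n m : ℕ}
    (ρ' σ' : Matrix (Fin n × Fin m) (Fin n × Fin m) ℂ)
    (hρ' : IsState ρ') (hσ' : IsState σ') (hsupp : SuppLE ρ' σ')
    (ρ σ : Matrix (Fin n) (Fin n) ℂ)
    (hρ : ∀ i j, ρ i j = ∑ l : Fin m, ρ' (i, l) (j, l))
    (hσ : ∀ i j, σ i j = ∑ l : Fin m, σ' (i, l) (j, l)) :
    (∀ F : Matrix (Fin n) (Fin n) ℂ, IsPOVMElem F → trR F σ ≠ 0 →
      trR F ρ * Real.logb 2 (trR F ρ / trR F σ) ≤ obsDiv ρ' σ') ∧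
    obsDiv ρ σ ≤ obsDiv ρ' σ' := by
  classical
  have hne : Nonempty (Fin n × Fin m) := by
    rcases isEmpty_or_nonempty (Fin n × Fin m) with h | h
    · exfalso
      have h0 : ρ'.trace = 0 := by
        rw [Matrix.trace]
        rw [Finset.univ_eq_empty, Finset.sum_empty]
      rw [hρ'.2] at h0
      exact one_ne_zero h0
    · exact h
  obtain ⟨c, hc, hPSD⟩ := exists_scale_posSemidef hρ'.1 hσ'.1 hsupp
  have hbound : ∀ F' : Matrix (Fin n × Fin m) (Fin n × Fin m) ℂ, F'.PosSemidef →
      trR F' ρ' ≤ c * trR F' σ' := by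
    intro F' hF'
    have h0 := trace_mul_re_nonneg hF' hPSD
    have hexp : F' * (((c : ℝ) : ℂ) • σ' - ρ') = ((c : ℝ) : ℂ) • (F' * σ') - F' * ρ' := by
      rw [Matrix.mul_sub, mul_smul_comm]
    rw [hexp, Matrix.trace_sub, Matrix.trace_smul, Complex.sub_re, smul_eq_mul,
      Complex.re_ofReal_mul] at h0
    show (F' * ρ').trace.re ≤ c * (F' * σ').trace.re
    linarith
  have hBdd : BddAbove {x : ℝ | ∃ F : Matrix (Fin n × Fin m) (Fin n × Fin m) ℂ,
      IsPOVMElem F ∧ trR F σ' ≠ 0 ∧ x = trR F ρ' * Real.logb 2 (trR F ρ' / trR F σ')} := by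
    refine ⟨max 0 (Real.logb 2 c), ?_⟩
    rintro x ⟨F, hF, hFσ, rfl⟩
    have hq0 : 0 ≤ trR F σ' := trace_mul_re_nonneg hF.1 hσ'.1
    have hq : 0 < trR F σ' := lt_of_le_of_ne hq0 (Ne.symm hFσ)
    have hp0 : 0 ≤ trR F ρ' := trace_mul_re_nonneg hF.1 hρ'.1
    have hp1 : trR F ρ' ≤ 1 := by
      have h1 := trace_mul_re_nonneg hF.2 hρ'.1
      have hexp : ((1 : Matrix (Fin n × Fin m) (Fin n × Fin m) ℂ) - F) * ρ'
          = ρ' - F * ρ' := by rw [Matrix.sub_mul, one_mul]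
      rw [hexp, Matrix.trace_sub, Complex.sub_re, hρ'.2] at h1
      have : Complex.re 1 = 1 := Complex.one_re
      rw [this] at h1
      show (F * ρ').trace.re ≤ 1
      linarith
    exact logb_bound hp0 hp1 hq (hbound F hF.1)
  have hmem : ∀ F : Matrix (Fin n) (Fin n) ℂ, IsPOVMElem F → trR F σ ≠ 0 →
      (trR F ρ * Real.logb 2 (trR F ρ / trR F σ)) ∈
        {x : ℝ | ∃ F : Matrix (Fin n × Fin m) (Fin n × Fin m) ℂ,
          IsPOVMElem F ∧ trR F σ' ≠ 0 ∧
          x = trR F ρ' * Real.logb 2 (trR F ρ' / trR F σ')} := by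
    intro F hF hFσ
    set F' : Matrix (Fin n × Fin m) (Fin n × Fin m) ℂ :=
      Matrix.of fun (p q : Fin n × Fin m) => F p.1 q.1 * (if p.2 = q.2 then 1 else 0) with hF'def
    have hsub : (1 : Matrix (Fin n × Fin m) (Fin n × Fin m) ℂ) - F'
        = Matrix.of fun (p q : Fin n × Fin m) =>
            ((1 : Matrix (Fin n) (Fin n) ℂ) - F) p.1 q.1 * (if p.2 = q.2 then 1 else 0) := by
      ext p q
      by_cases h2 : p.2 = q.2 <;> by_cases h1 : p.1 = q.1 <;>
        simp [hF'def, Matrix.sub_apply, Matrix.one_apply, Prod.ext_iff, h1, h2]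
    have hPOVM : IsPOVMElem F' := by
      constructor
      · exact kron_posSemidef hF.1
      · rw [hsub]; exact kron_posSemidef hF.2
    have htrρ : trR F' ρ' = trR F ρ := by
      show ((F' * ρ').trace).re = ((F * ρ).trace).re
      rw [kron_trace_eq F ρ' ρ hρ]
    have htrσ : trR F' σ' = trR F σ := by
      show ((F' * σ').trace).re = ((F * σ).trace).re
      rw [kron_trace_eq F σ' σ hσ]
    exact ⟨F', hPOVM, by rw [htrσ]; exact hFσ, by rw [htrρ, htrσ]⟩
  constructor
  · intro F hF hFσ
    exact le_csSup hBdd (hmem F hF hFσ)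
  · apply csSup_le_csSup hBdd
    · -- nonempty : use F = 1
      have htrσeq : σ.trace = σ'.trace := by
        rw [Matrix.trace, Matrix.trace]
        rw [Fintype.sum_prod_type]
        apply Finset.sum_congr rfl
        intro i _
        show σ i i = ∑ y : Fin m, σ' (i, y) (i, y)
        rw [hσ i i]
      have h1 : trR (1 : Matrix (Fin n) (Fin n) ℂ) σ ≠ 0 := by
        show (((1 : Matrix (Fin n) (Fin n) ℂ) * σ).trace).re ≠ 0
        rw [one_mul, htrσeq, hσ'.2]
        norm_num
      refine ⟨_, 1, ⟨Matrix.PosSemidef.one, ?_⟩, h1, rfl⟩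
      rw [sub_self]
      exact Matrix.PosSemidef.zero
    · rintro x ⟨F, hF, hFσ, rfl⟩
      exact hmem F hF hFσ

end
end
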